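/- Suppose f is C^p with D^p f Lipschitz with constant L_p, and at iteration k-1 the sketched gradient condition holds: grad_shat That(x_{k-1}, shat_{k-1}) = S_{k-1} grad_s T_{f,p}(x_{k-1}, s_{k-1}) where s_{k-1} = S_{k-1}^T shat_{k-1}. Then (||S_{k-1} g_k|| - ||grad_shat That(x_{k-1}, shat_{k-1})||) / (||S_{k-1}|| ||s_{k-1}||^p) <= L_p, where g_k = grad f(x_{k-1} + s_{k-1}). -/

import Mathlib

open Set Finset ContinuousLinearMap RealInnerProductSpace

/-- Degree-`p` Taylor polynomial of `f` at `x`, evaluated at increment `s`. -/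
noncomputable def taylorPoly {n : ℕ} (p : ℕ) (f : EuclideanSpace ℝ (Fin n) → ℝ)
    (x s : EuclideanSpace ℝ (Fin n)) : ℝ :=
  f x + ∑ i ∈ Finset.Icc 1 p, (1 / (i.factorial : ℝ)) * iteratedFDeriv ℝ i f x (fun _ => s)

lemma chain_taylor_bound {F : Type*} [NormedAddCommGroup F] [NormedSpace ℝ F] :
    ∀ (m : ℕ) (G : ℕ → ℝ → F) (K : ℝ), 0 ≤ K →
    (∀ j < m, ∀ t ∈ Set.Icc (0:ℝ) 1, HasDerivAt (G j) (G (j+1) t) t) →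
    (∀ t ∈ Set.Icc (0:ℝ) 1, ‖G m t - G m 0‖ ≤ K * t) →
    ∀ t ∈ Set.Icc (0:ℝ) 1,
      ‖G 0 t - ∑ j ∈ Finset.range (m+1), ((t^j / j.factorial : ℝ)) • G j 0‖ ≤ K * t := by
  intro m
  induction m with
  | zero =>
    intro G K hK hderiv hlip t ht
    simpa using hlip t ht
  | succ m IH =>
    intro G K hK hderiv hlip t ht
    have IH' := IH (fun j => G (j+1)) K hK
      (fun j hj t ht => hderiv (j+1) (by omega) t ht)
      (fun t ht => hlip t ht)
    set H : ℝ → F := fun τ => G 0 τ - ∑ j ∈ Finset.range (m+2),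
      ((τ^j / j.factorial : ℝ)) • G j 0 with hH
    have hH0 : H 0 = 0 := by
      have : ∀ j ∈ Finset.range (m+2), (((0:ℝ)^j / j.factorial : ℝ)) • G j 0
          = if j = 0 then G 0 0 else 0 := by
        intro j hj
        rcases j with _ | j
        · simp
        · simp
      rw [hH]
      simp only [Finset.sum_congr rfl this, Finset.sum_ite_eq' (Finset.range (m+2)) 0]
      simp
    have hHderiv : ∀ τ ∈ Set.Icc (0:ℝ) 1, HasDerivAt H
        (G 1 τ - ∑ j ∈ Finset.range (m+1), ((τ^j / j.factorial : ℝ)) • G (j+1) 0) τ := by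
      intro τ hτ
      have h1 : HasDerivAt (fun τ : ℝ => ∑ j ∈ Finset.range (m+2),
          ((τ^j / j.factorial : ℝ)) • G j 0)
          (∑ j ∈ Finset.range (m+2), ((j * τ^(j-1) / j.factorial : ℝ)) • G j 0) τ := by
        apply HasDerivAt.fun_sum
        intro j hj
        have := (hasDerivAt_pow j τ).div_const (j.factorial : ℝ)
        exact this.smul_const (G j 0)
      have h2 : (∑ j ∈ Finset.range (m+2), ((j * τ^(j-1) / j.factorial : ℝ)) • G j 0)
          = ∑ j ∈ Finset.range (m+1), ((τ^j / j.factorial : ℝ)) • G (j+1) 0 := by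
        rw [Finset.sum_range_succ' (fun j => ((j * τ^(j-1) / j.factorial : ℝ)) • G j 0) (m+1)]
        simp only [Nat.cast_zero, zero_mul, zero_div, zero_smul, add_zero]
        apply Finset.sum_congr rfl
        intro j hj
        congr 1
        rw [Nat.factorial_succ]
        push_cast [Nat.add_sub_cancel]
        have hne : ((j:ℝ)+1) ≠ 0 := by positivity
        field_simp
      have := (hderiv 0 (by omega) τ hτ).sub (h1)
      rw [h2] at this
      exact this
    have hbound : ∀ τ ∈ Set.Ico (0:ℝ) 1,
        ‖G 1 τ - ∑ j ∈ Finset.range (m+1), ((τ^j / j.factorial : ℝ)) • G (j+1) 0‖ ≤ K := by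
      intro τ hτ
      have := IH' τ ⟨hτ.1, le_of_lt hτ.2⟩
      calc ‖G 1 τ - ∑ j ∈ Finset.range (m+1), ((τ^j / j.factorial : ℝ)) • G (j+1) 0‖
          ≤ K * τ := this
        _ ≤ K * 1 := by nlinarith [hτ.1, le_of_lt hτ.2]
        _ = K := mul_one K
    have := norm_image_sub_le_of_norm_deriv_le_segment'
      (f := H) (a := 0) (b := 1)
      (f' := fun τ => G 1 τ - ∑ j ∈ Finset.range (m+1), ((τ^j / j.factorial : ℝ)) • G (j+1) 0)
      (fun τ hτ => (hHderiv τ hτ).hasDerivWithinAt) hbound t ht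
    rw [hH0] at this
    simpa using this

lemma sym_special {E : Type} [NormedAddCommGroup E] [NormedSpace ℝ E] (s v : E) :
    ∀ (i : ℕ) {F : Type} [NormedAddCommGroup F] [NormedSpace ℝ F]
      (g : E → F), ContDiff ℝ (i : WithTop ℕ∞) g → ∀ (x : E) (k : ℕ), k < i →
      iteratedFDeriv ℝ i g x (fun m => if (m : ℕ) = k then v else s)
        = iteratedFDeriv ℝ i g x (fun m => if (m : ℕ) = i - 1 then v else s) := by
  intro i
  induction i with
  | zero => intro F _ _ g hg x k hk; omega
  | succ m IH =>
    cases m with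
    | zero =>
      intro F _ _ g hg x k hk
      interval_cases k
      rfl
    | succ m =>
      intro F _ _ g hg x k hk
      rcases Nat.lt_or_ge k (m+1) with hk' | hk'
      · -- k ≤ m, v not in last slot
        have hg' : ContDiff ℝ ((m+1 : ℕ) : WithTop ℕ∞) (fun y => fderiv ℝ g y) := by
          apply hg.fderiv_right
          exact_mod_cast Nat.le_refl (m+2)
        have hg'' : ContDiff ℝ ((m : ℕ) : WithTop ℕ∞)
            (fun y => fderiv ℝ (fun y => fderiv ℝ g y) y) := by
          apply hg'.fderiv_right
          exact_mod_cast Nat.le_refl (m+1)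
        have e1 : Fin.init (fun q : Fin (m+2) => if (q : ℕ) = k then v else s)
            = fun q : Fin (m+1) => if (q : ℕ) = k then v else s := by
          funext q; simp [Fin.init]
        have e3 : Fin.init (fun q : Fin (m+1) => if (q : ℕ) = m then v else s)
            = fun _ : Fin m => s := by
          funext q; simp only [Fin.init, Fin.coe_castSucc]
          rw [if_neg (by omega : ¬ ((q:ℕ) = m))]
        have e4 : Fin.init (fun q : Fin (m+2) => if (q : ℕ) = (m+1) then v else s)
            = fun _ : Fin (m+1) => s := by
          funext q; simp only [Fin.init, Fin.coe_castSucc]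
          rw [if_neg (by omega : ¬ ((q:ℕ) = m+1))]
        have e5 : Fin.init (fun _ : Fin (m+1) => s) = fun _ : Fin m => s := rfl
        set B := iteratedFDeriv ℝ m (fun y => fderiv ℝ (fun y => fderiv ℝ g y) y) x
          (fun _ : Fin m => s) with hB
        have hL : iteratedFDeriv ℝ (m+2) g x (fun q => if (q : ℕ) = k then v else s)
            = (B v) s := by
          rw [iteratedFDeriv_succ_apply_right, e1]
          simp only [Fin.val_last]
          rw [if_neg (by omega : ¬ ((m+1 : ℕ) = k))]
          rw [IH (fun y => fderiv ℝ g y) hg' x k hk']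
          have hlast : (m + 1 : ℕ) - 1 = m := by omega
          rw [hlast, iteratedFDeriv_succ_apply_right, e3]
          simp [hB]
        have hR : iteratedFDeriv ℝ (m+2) g x (fun q => if (q : ℕ) = (m+2-1) then v else s)
            = (B s) v := by
          have : (m+2-1 : ℕ) = m+1 := rfl
          rw [this, iteratedFDeriv_succ_apply_right, e4]
          simp only [Fin.val_last, if_pos rfl]
          rw [iteratedFDeriv_succ_apply_right, e5]
          simp [hB]
        rw [hL, hR]
        -- symmetry of the bilinear part
        set Φ : (E →L[ℝ] E →L[ℝ] F) →L[ℝ] (E →L[ℝ] E →L[ℝ] F) :=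
          (↑((ContinuousLinearMap.flipₗᵢ ℝ E E F).toContinuousLinearEquiv) :
            (E →L[ℝ] E →L[ℝ] F) →L[ℝ] (E →L[ℝ] E →L[ℝ] F)) with hΦ
        have hΦapp : ∀ c : E →L[ℝ] E →L[ℝ] F, Φ c = c.flip := by
          intro c
          simp [hΦ, ContinuousLinearMap.coe_flipₗᵢ]
        have hΦeq : (fun y => fderiv ℝ (fun y => fderiv ℝ g y) y)
            = Φ ∘ (fun y => fderiv ℝ (fun y => fderiv ℝ g y) y) := by
          funext y
          have h2 : IsSymmSndFDerivAt ℝ g y := by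
            apply ContDiffAt.isSymmSndFDerivAt hg.contDiffAt
            rw [minSmoothness_of_isRCLikeNormedField]
            exact_mod_cast (by omega : 2 ≤ m + 2)
          simp only [Function.comp_apply, hΦapp]
          ext a b
          exact h2.eq a b
        have hcl := ContinuousLinearMap.iteratedFDeriv_comp_left (𝕜 := ℝ) (E := E)
          (F := (E →L[ℝ] E →L[ℝ] F)) (G := (E →L[ℝ] E →L[ℝ] F)) (g := Φ)
          (f := fun y => fderiv ℝ (fun y => fderiv ℝ g y) y) (x := x) hg''.contDiffAt (i := m) le_rfl
        have key : B = Φ B := by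
          rw [hB]
          conv_lhs => rw [hΦeq]
          rw [hcl]
          simp
        conv_lhs => rw [key]
        rw [hΦapp]
        rfl
      · have : k = m + 1 := by omega
        subst this
        rfl

lemma grad_taylor_general {E : Type} [NormedAddCommGroup E] [InnerProductSpace ℝ E]
    [CompleteSpace E]
    (p : ℕ) (hp : 1 ≤ p) (f : E → ℝ) (L : ℝ) (hL : 0 ≤ L)
    (hf : ContDiff ℝ (p : ℕ∞) f)
    (hlip : ∀ x y : E, ‖iteratedFDeriv ℝ p f x - iteratedFDeriv ℝ p f y‖ ≤ L * ‖x - y‖)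
    (x s : E) :
    ‖gradient f (x + s) - gradient (fun t => f x + ∑ i ∈ Finset.Icc 1 p,
        (1 / (i.factorial : ℝ)) * iteratedFDeriv ℝ i f x (fun _ => t)) s‖ ≤ L * ‖s‖ ^ p := by
  obtain ⟨m, rfl⟩ : ∃ m, p = m + 1 := ⟨p - 1, by omega⟩
  -- the derivative of the Taylor polynomial at s
  set Dt : E →L[ℝ] ℝ := ∑ i ∈ Finset.Icc 1 (m+1), (1 / (i.factorial : ℝ)) •
      (((iteratedFDeriv ℝ i f x).linearDeriv (fun _ => s)).comp
        (ContinuousLinearMap.pi (fun _ : Fin i => ContinuousLinearMap.id ℝ E))) with hDt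
  have hTerm : ∀ i : ℕ, HasFDerivAt (fun t : E => iteratedFDeriv ℝ i f x (fun _ => t))
      (((iteratedFDeriv ℝ i f x).linearDeriv (fun _ => s)).comp
        (ContinuousLinearMap.pi (fun _ : Fin i => ContinuousLinearMap.id ℝ E))) s := by
    intro i
    have hdiag : HasFDerivAt (fun t : E => (fun _ : Fin i => t))
        (ContinuousLinearMap.pi (fun _ : Fin i => ContinuousLinearMap.id ℝ E)) s :=
      (ContinuousLinearMap.pi (fun _ : Fin i => ContinuousLinearMap.id ℝ E)).hasFDerivAt
    have hA := (iteratedFDeriv ℝ i f x).hasFDerivAt (x := fun _ : Fin i => s)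
    exact hA.comp s hdiag
  have hT : HasFDerivAt (fun t : E => f x + ∑ i ∈ Finset.Icc 1 (m+1),
      (1 / (i.factorial : ℝ)) * iteratedFDeriv ℝ i f x (fun _ => t)) Dt s := by
    rw [hDt]
    apply HasFDerivAt.const_add
    apply HasFDerivAt.fun_sum
    intro i _
    exact (hTerm i).const_mul _
  -- value of Dt
  have hDtval : ∀ v : E, Dt v = ∑ j ∈ Finset.range (m+1), (1 / (j.factorial : ℝ)) *
      iteratedFDeriv ℝ (j+1) f x (fun q : Fin (j+1) => if (q : ℕ) = j then v else s) := by
    intro v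
    have hC : ∀ i ∈ Finset.Icc 1 (m+1), ((1 / (i.factorial : ℝ)) •
        (((iteratedFDeriv ℝ i f x).linearDeriv (fun _ => s)).comp
          (ContinuousLinearMap.pi (fun _ : Fin i => ContinuousLinearMap.id ℝ E)))) v
        = (1 / ((i-1).factorial : ℝ)) *
          iteratedFDeriv ℝ i f x (fun q : Fin i => if (q : ℕ) = i - 1 then v else s) := by
      intro i hi
      simp only [Finset.mem_Icc] at hi
      have hupd : ∀ k : Fin i, Function.update (fun _ : Fin i => s) k v
          = fun q : Fin i => if (q : ℕ) = (k : ℕ) then v else s := by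
        intro k
        funext q
        rcases eq_or_ne q k with h | h
        · subst h; simp
        · rw [Function.update_of_ne h, if_neg (fun hh => h (Fin.ext hh))]
      have hsym : ∀ k : Fin i,
          iteratedFDeriv ℝ i f x (fun q : Fin i => if (q : ℕ) = (k : ℕ) then v else s)
          = iteratedFDeriv ℝ i f x (fun q : Fin i => if (q : ℕ) = i - 1 then v else s) := by
        intro k
        exact sym_special s v i f (hf.of_le (by exact_mod_cast hi.2)) x k k.isLt
      simp only [ContinuousLinearMap.smul_apply, ContinuousLinearMap.comp_apply,
        ContinuousMultilinearMap.linearDeriv_apply, ContinuousLinearMap.pi_apply,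
        ContinuousLinearMap.id_apply]
      rw [Finset.sum_congr rfl (fun k _ => by rw [hupd k, hsym k]),
        Finset.sum_const, Finset.card_univ, Fintype.card_fin]
      obtain ⟨j, rfl⟩ : ∃ j, i = j + 1 := ⟨i - 1, by omega⟩
      simp only [smul_eq_mul, Nat.add_sub_cancel, Nat.factorial_succ]
      push_cast
      have h1 : ((j.factorial : ℝ)) ≠ 0 := by positivity
      have h2 : ((j:ℝ) + 1) ≠ 0 := by positivity
      field_simp
      ring
    rw [hDt, ContinuousLinearMap.sum_apply, Finset.sum_congr rfl hC,
      ← Finset.Ico_add_one_right_eq_Icc, Finset.sum_Ico_eq_sum_range]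
    apply Finset.sum_congr (by norm_num)
    intro j _
    rw [Nat.add_comm 1 j]
    simp
  -- the directional bound
  have key : ∀ v : E, |fderiv ℝ f (x + s) v - Dt v| ≤ L * ‖s‖^(m+1) * ‖v‖ := by
    intro v
    set G : ℕ → ℝ → ℝ := fun j t => iteratedFDeriv ℝ (j+1) f (x + t • s)
      (fun q : Fin (j+1) => if (q : ℕ) = j then v else s) with hG
    set K : ℝ := L * ‖s‖^(m+1) * ‖v‖ with hK
    have hKnn : 0 ≤ K := by positivity
    have htaylor : HasFTaylorSeriesUpTo ((m+1 : ℕ) : ℕ∞) f (ftaylorSeries ℝ f) :=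
      contDiff_iff_ftaylorSeries.mp hf
    have hderiv : ∀ j < m, ∀ t ∈ Set.Icc (0:ℝ) 1, HasDerivAt (G j) (G (j+1) t) t := by
      intro j hj t _
      have hγ : HasDerivAt (fun t : ℝ => x + t • s) s t := by
        simpa using ((hasDerivAt_id t).smul_const s).const_add x
      have hfd := htaylor.fderiv (j+1) (by exact_mod_cast (by omega : j + 1 < m + 1)) (x + t • s)
      have hcomp := hfd.comp_hasDerivAt t hγ
      have happ := ((ContinuousMultilinearMap.apply ℝ (fun _ : Fin (j+1) => E) ℝ
        (fun q : Fin (j+1) => if (q : ℕ) = j then v else s)).hasFDerivAt).comp_hasDerivAt t hcomp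
      convert happ using 1
      show G (j+1) t = ((ftaylorSeries ℝ f (x + t • s) (j+1+1)).curryLeft s)
        (fun q : Fin (j+1) => if (q : ℕ) = j then v else s)
      rw [ContinuousMultilinearMap.curryLeft_apply]
      show iteratedFDeriv ℝ (j+2) f (x + t • s)
          (fun q : Fin (j+2) => if (q : ℕ) = j+1 then v else s)
        = iteratedFDeriv ℝ (j+2) f (x + t • s)
          (Fin.cons s (fun q : Fin (j+1) => if (q : ℕ) = j then v else s))
      congr 1
      funext q
      refine Fin.cases ?_ (fun q' => ?_) q
      · simp
      · simp [Fin.cons_succ]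
      all_goals rfl
    have hlipG : ∀ t ∈ Set.Icc (0:ℝ) 1, ‖G m t - G m 0‖ ≤ K * t := by
      intro t ht
      have hsub : G m t - G m 0 = (iteratedFDeriv ℝ (m+1) f (x + t • s)
          - iteratedFDeriv ℝ (m+1) f (x + (0:ℝ) • s))
          (fun q : Fin (m+1) => if (q : ℕ) = m then v else s) := by
        simp [hG, ContinuousMultilinearMap.sub_apply]
      have h1 := ContinuousMultilinearMap.le_opNorm (iteratedFDeriv ℝ (m+1) f (x + t • s)
          - iteratedFDeriv ℝ (m+1) f (x + (0:ℝ) • s))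
          (fun q : Fin (m+1) => if (q : ℕ) = m then v else s)
      have h2 : ∏ q : Fin (m+1), ‖if (q : ℕ) = m then v else s‖ = ‖s‖^m * ‖v‖ := by
        have e : ∀ q : Fin m, ‖if ((q.castSucc : Fin (m+1)) : ℕ) = m then v else s‖ = ‖s‖ := by
          intro q
          rw [if_neg]
          have := q.isLt
          simp only [Fin.coe_castSucc]
          omega
        rw [Fin.prod_univ_castSucc, Finset.prod_congr rfl (fun q _ => e q)]
        simp [Finset.prod_const]
      have h3 : ‖iteratedFDeriv ℝ (m+1) f (x + t • s)
          - iteratedFDeriv ℝ (m+1) f (x + (0:ℝ) • s)‖ ≤ L * (t * ‖s‖) := by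
        have := hlip (x + t • s) (x + (0:ℝ) • s)
        have he : x + t • s - (x + (0:ℝ) • s) = t • s := by
          simp
        rw [he] at this
        calc ‖iteratedFDeriv ℝ (m+1) f (x + t • s)
            - iteratedFDeriv ℝ (m+1) f (x + (0:ℝ) • s)‖ ≤ L * ‖t • s‖ := this
          _ = L * (t * ‖s‖) := by rw [norm_smul, Real.norm_eq_abs, abs_of_nonneg ht.1]
      rw [hsub]
      refine h1.trans ?_
      rw [h2]
      have h4 := mul_le_mul_of_nonneg_right h3 (show (0:ℝ) ≤ ‖s‖^m * ‖v‖ by positivity)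
      refine h4.trans ?_
      rw [hK]
      ring_nf
      exact le_of_eq (by ring)
    have hch := chain_taylor_bound m G K hKnn hderiv hlipG 1 ⟨zero_le_one, le_rfl⟩
    have hG0 : G 0 1 = fderiv ℝ f (x + s) v := by
      have : x + (1:ℝ) • s = x + s := by rw [one_smul]
      rw [hG]
      show iteratedFDeriv ℝ 1 f (x + (1:ℝ) • s) _ = _
      rw [this, iteratedFDeriv_one_apply]
      norm_num
    have hsum : ∑ j ∈ Finset.range (m+1), (((1:ℝ)^j / j.factorial : ℝ)) • G j 0 = Dt v := by
      rw [hDtval v]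
      apply Finset.sum_congr rfl
      intro j _
      have : x + (0:ℝ) • s = x := by simp
      rw [hG]
      show ((1:ℝ)^j / j.factorial : ℝ) • iteratedFDeriv ℝ (j+1) f (x + (0:ℝ) • s) _ = _
      rw [this, one_pow, smul_eq_mul]
    rw [hG0, hsum] at hch
    simpa using hch
  -- assemble
  have hgradT : gradient (fun t : E => f x + ∑ i ∈ Finset.Icc 1 (m+1),
      (1 / (i.factorial : ℝ)) * iteratedFDeriv ℝ i f x (fun _ => t)) s
      = (InnerProductSpace.toDual ℝ E).symm Dt := hT.hasGradientAt.gradient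
  have hgradf : gradient f (x + s)
      = (InnerProductSpace.toDual ℝ E).symm (fderiv ℝ f (x + s)) := rfl
  set w := gradient f (x + s) - gradient (fun t : E => f x + ∑ i ∈ Finset.Icc 1 (m+1),
      (1 / (i.factorial : ℝ)) * iteratedFDeriv ℝ i f x (fun _ => t)) s with hw
  have hwinner : ∀ v : E, ⟪w, v⟫ = fderiv ℝ f (x + s) v - Dt v := by
    intro v
    rw [hw, inner_sub_left, hgradf, hgradT,
      InnerProductSpace.toDual_symm_apply, InnerProductSpace.toDual_symm_apply]
  show ‖w‖ ≤ L * ‖s‖^(m+1)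
  rcases eq_or_ne w 0 with h0 | h0
  · rw [h0, norm_zero]; positivity
  · have hsq : ‖w‖^2 ≤ L * ‖s‖^(m+1) * ‖w‖ := by
      calc ‖w‖^2 = |⟪w, w⟫| := by
            rw [real_inner_self_eq_norm_sq]
            exact (abs_of_nonneg (by positivity)).symm
        _ = |fderiv ℝ f (x + s) w - Dt w| := by rw [hwinner w]
        _ ≤ L * ‖s‖^(m+1) * ‖w‖ := key w
    have hnw : 0 < ‖w‖ := norm_pos_iff.mpr h0
    nlinarith [hsq, hnw]

/-- The quantity `(‖S_{k-1} g_k‖ - ‖∇_ŝ T̂(x_{k-1}, ŝ_{k-1})‖)/(‖S_{k-1}‖ ‖s_{k-1}‖^p)`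
is a lower bound on the Lipschitz constant `L_p`. -/
theorem mu_lower_bound {n l : ℕ} (p : ℕ) (hp : 1 ≤ p)
    (f : EuclideanSpace ℝ (Fin n) → ℝ) (L : ℝ) (hL : 0 ≤ L)
    (hf : ContDiff ℝ (p : ℕ∞) f)
    (hlip : ∀ x y : EuclideanSpace ℝ (Fin n),
      ‖iteratedFDeriv ℝ p f x - iteratedFDeriv ℝ p f y‖ ≤ L * ‖x - y‖)
    (S : EuclideanSpace ℝ (Fin n) →L[ℝ] EuclideanSpace ℝ (Fin l))
    (x : EuclideanSpace ℝ (Fin n)) (shat : EuclideanSpace ℝ (Fin l))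
    (s : EuclideanSpace ℝ (Fin n)) (hs : s = ContinuousLinearMap.adjoint S shat)
    (hsne : s ≠ 0) (hSpos : 0 < ‖S‖)
    -- the sketched gradient condition (chain rule identity):
    (hchain : gradient (fun t => taylorPoly p f x (ContinuousLinearMap.adjoint S t)) shat
      = S (gradient (fun t => taylorPoly p f x t) s)) :
    (‖S (gradient f (x + s))‖
        - ‖gradient (fun t => taylorPoly p f x (ContinuousLinearMap.adjoint S t)) shat‖)
      / (‖S‖ * ‖s‖ ^ p) ≤ L := by
  have hw : ‖gradient f (x + s) - gradient (fun t => taylorPoly p f x t) s‖ ≤ L * ‖s‖ ^ p :=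
    grad_taylor_general p hp f L hL hf hlip x s
  have hpos : 0 < ‖S‖ * ‖s‖ ^ p :=
    mul_pos hSpos (pow_pos (norm_pos_iff.mpr hsne) p)
  rw [div_le_iff₀ hpos, hchain]
  calc ‖S (gradient f (x + s))‖ - ‖S (gradient (fun t => taylorPoly p f x t) s)‖
      ≤ ‖S (gradient f (x + s)) - S (gradient (fun t => taylorPoly p f x t) s)‖ :=
        norm_sub_norm_le _ _
    _ = ‖S (gradient f (x + s) - gradient (fun t => taylorPoly p f x t) s)‖ := by
        rw [map_sub]
    _ ≤ ‖S‖ * ‖gradient f (x + s) - gradient (fun t => taylorPoly p f x t) s‖ :=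
        S.le_opNorm _
    _ ≤ ‖S‖ * (L * ‖s‖ ^ p) := by
        exact mul_le_mul_of_nonneg_left hw (norm_nonneg S)
    _ = L * (‖S‖ * ‖s‖ ^ p) := by ring
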